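/- Let Λ be a finite connected triangle-free simplicial graph with at least one edge. Then the underlying complex |RI(S(Λ))| of the reduced intersection complex of the Salvetti complex S(Λ) is a connected simplicial complex; in particular, no collection of vertices spans more than one simplex. -/

import Mathlib

/-!
**Statement 16.**  For a connected triangle-free graph `Λ` with at least one edge,
the underlying complex `|RI(S(Λ))|` of the reduced intersection complex of the
Salvetti complex is a connected simplicial complex: no collection of vertices spans
more than one simplex, and the complex is connected.
-/

noncomputable section

open Metric Pointwise

/-- `W` spans a join subgraph of `Λ`:  the full subgraph on `W` decomposes as a join
`W₁ ∘ W₂` with both parts nonempty (every vertex of `W₁` is adjacent to every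
vertex of `W₂`). -/
def IsJoinSet {V : Type} (Λ : SimpleGraph V) (W : Set V) : Prop :=
  ∃ W₁ W₂ : Set V, W₁.Nonempty ∧ W₂.Nonempty ∧ W₁ ∪ W₂ = W ∧ Disjoint W₁ W₂ ∧
    ∀ v ∈ W₁, ∀ w ∈ W₂, Λ.Adj v w

/-- The (vertex sets of the) maximal join subgraphs of `Λ`. -/
def maxJoinSets {V : Type} (Λ : SimpleGraph V) : Set (Set V) :=
  {W | IsJoinSet Λ W ∧ ∀ W' : Set V, IsJoinSet Λ W' → W ⊆ W' → W' = W}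

/-- `(s, W)` is a simplex of the reduced intersection complex `RI(S(Λ))`: `s` is a
finite nonempty collection of maximal join subgraphs of `Λ` and `W` is a join
subgraph contained in all members of `s` and maximal with this property. -/
def RISCond {V : Type} (Λ : SimpleGraph V) (s : Finset (Set V)) (W : Set V) : Prop :=
  s.Nonempty ∧ (↑s : Set (Set V)) ⊆ maxJoinSets Λ ∧ IsJoinSet Λ W ∧
    (∀ U ∈ s, W ⊆ U) ∧
    ∀ W' : Set V, IsJoinSet Λ W' → (∀ U ∈ s, W' ⊆ U) → W ⊆ W' → W' = W

/-- The vertex graph of `|RI(S(Λ))|`: vertices are the maximal join subgraphs of `Λ`,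
two of them being adjacent when they span an edge of `RI(S(Λ))`, i.e. when their
intersection contains a join subgraph. -/
def joinVertexGraph {V : Type} (Λ : SimpleGraph V) :
    SimpleGraph {W : Set V // W ∈ maxJoinSets Λ} where
  Adj U W := U ≠ W ∧ ∃ J : Set V, IsJoinSet Λ J ∧ J ⊆ U.1 ∧ J ⊆ W.1
  symm := ⟨by
    rintro U W ⟨hne, J, hJ, h1, h2⟩
    exact ⟨hne.symm, J, hJ, h2, h1⟩⟩
  loopless := ⟨fun U h => h.1 rfl⟩

section Aux

variable {V : Type} (Λ : SimpleGraph V)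

/-- Two mutually adjacent nonempty sets form a join set. -/
lemma isJoinSet_of_adj {P Q : Set V} (hP : P.Nonempty) (hQ : Q.Nonempty)
    (h : ∀ v ∈ P, ∀ w ∈ Q, Λ.Adj v w) : IsJoinSet Λ (P ∪ Q) := by
  refine ⟨P, Q, hP, hQ, rfl, ?_, h⟩
  rw [Set.disjoint_left]
  intro x hxP hxQ
  exact Λ.loopless.irrefl x (h x hxP x hxQ)

/-- In a triangle-free graph, each side of a join is an independent set. -/
lemma indep_part (hTF : Λ.CliqueFree 3) {A B : Set V}
    (hAdj : ∀ v ∈ A, ∀ w ∈ B, Λ.Adj v w) (hB : B.Nonempty)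
    {a a' : V} (ha : a ∈ A) (ha' : a' ∈ A) : ¬ Λ.Adj a a' := by
  classical
  intro h
  obtain ⟨b, hb⟩ := hB
  exact hTF {a, a', b} (SimpleGraph.is3Clique_triple_iff.mpr
    ⟨h, hAdj a ha b hb, hAdj a' ha' b hb⟩)

lemma side_aux (hTF : Λ.CliqueFree 3) {A B P Q : Set V}
    (hAdjU : ∀ v ∈ A, ∀ w ∈ B, Λ.Adj v w) (hA : A.Nonempty) (hB : B.Nonempty)
    (hDisj : Disjoint A B)
    (hPQ : ∀ v ∈ P, ∀ w ∈ Q, Λ.Adj v w) (hQ : Q.Nonempty)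
    (hsub : P ∪ Q ⊆ A ∪ B) {p₀ : V} (hp₀ : p₀ ∈ P) (h0A : p₀ ∈ A) :
    P ⊆ A ∧ Q ⊆ B := by
  have hAB : ∀ p ∈ P, p ∈ A → ∀ q ∈ Q, q ∈ B := by
    intro p hp hpA q hq
    rcases hsub (Or.inr hq) with hqA | hqB
    · exact absurd (hPQ p hp q hq) (indep_part Λ hTF hAdjU hB hpA hqA)
    · exact hqB
  have hBA : ∀ p ∈ P, p ∈ B → ∀ q ∈ Q, q ∈ A := by
    intro p hp hpB q hq
    rcases hsub (Or.inr hq) with hqA | hqB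
    · exact hqA
    · exact absurd (hPQ p hp q hq)
        (indep_part Λ hTF (fun v hv w hw => (hAdjU w hw v hv).symm) hA hpB hqB)
  have hQB : Q ⊆ B := fun q hq => hAB p₀ hp₀ h0A q hq
  refine ⟨?_, hQB⟩
  intro p hp
  rcases hsub (Or.inl hp) with hpA | hpB
  · exact hpA
  · obtain ⟨q, hq⟩ := hQ
    exact absurd (hQB hq) (Set.disjoint_left.mp hDisj (hBA p hp hpB q hq))

/-- Any join set contained in a join `A ∘ B` is aligned with the sides. -/
lemma side_lemma (hTF : Λ.CliqueFree 3) {A B P Q : Set V}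
    (hAdjU : ∀ v ∈ A, ∀ w ∈ B, Λ.Adj v w) (hA : A.Nonempty) (hB : B.Nonempty)
    (hDisj : Disjoint A B)
    (hPQ : ∀ v ∈ P, ∀ w ∈ Q, Λ.Adj v w) (hP : P.Nonempty) (hQ : Q.Nonempty)
    (hsub : P ∪ Q ⊆ A ∪ B) :
    (P ⊆ A ∧ Q ⊆ B) ∨ (P ⊆ B ∧ Q ⊆ A) := by
  obtain ⟨p₀, hp₀⟩ := hP
  rcases hsub (Or.inl hp₀) with h0A | h0B
  · exact Or.inl (side_aux Λ hTF hAdjU hA hB hDisj hPQ hQ hsub hp₀ h0A)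
  · exact Or.inr (side_aux Λ hTF (fun v hv w hw => (hAdjU w hw v hv).symm) hB hA
      hDisj.symm hPQ hQ (by rwa [Set.union_comm A B] at hsub) hp₀ h0B)

/-- Union of two aligned join sets inside the join `A ∘ B` is again a join set. -/
lemma union_is_join {A B P Q P' Q' : Set V}
    (hAdjU : ∀ v ∈ A, ∀ w ∈ B, Λ.Adj v w)
    (hPQ : ∀ v ∈ P, ∀ w ∈ Q, Λ.Adj v w)
    (hP'Q' : ∀ v ∈ P', ∀ w ∈ Q', Λ.Adj v w)
    (hPA : P ⊆ A) (hQB : Q ⊆ B) (hP'A : P' ⊆ A) (hQ'B : Q' ⊆ B)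
    (hP : P.Nonempty) (hQ : Q.Nonempty) :
    IsJoinSet Λ ((P ∪ Q) ∪ (P' ∪ Q')) := by
  have hrw : (P ∪ Q) ∪ (P' ∪ Q') = (P ∪ P') ∪ (Q ∪ Q') := Set.union_union_union_comm P Q P' Q'
  rw [hrw]
  refine isJoinSet_of_adj Λ (hP.mono Set.subset_union_left) (hQ.mono Set.subset_union_left) ?_
  rintro v (hv | hv) w (hw | hw)
  · exact hPQ v hv w hw
  · exact hAdjU v (hPA hv) w (hQ'B hw)
  · exact hAdjU v (hP'A hv) w (hQB hw)
  · exact hP'Q' v hv w hw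

/-- Every join set extends to a maximal one. -/
lemma exists_maximal_join [Fintype V] {J : Set V} (hJ : IsJoinSet Λ J) :
    ∃ M, M ∈ maxJoinSets Λ ∧ J ⊆ M := by
  classical
  have hfin : {W : Set V | IsJoinSet Λ W ∧ J ⊆ W}.Finite := Set.toFinite _
  obtain ⟨M, -, hM⟩ := Set.Finite.exists_le_maximal hfin
    (show J ∈ {W : Set V | IsJoinSet Λ W ∧ J ⊆ W} from ⟨hJ, subset_rfl⟩)
  refine ⟨M, ⟨hM.1.1, ?_⟩, hM.1.2⟩
  intro W' hW' hsub
  exact (hM.eq_of_le ⟨hW', hM.1.2.trans hsub⟩ hsub).symm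

lemma exists_neighbor (hconn : Λ.Connected) (hedge : ∃ v w : V, Λ.Adj v w) (v : V) :
    ∃ w, Λ.Adj v w := by
  obtain ⟨a, b, hab⟩ := hedge
  obtain ⟨p⟩ := hconn.preconnected v a
  cases p with
  | nil => exact ⟨b, hab⟩
  | cons h _ => exact ⟨_, h⟩

end Aux

/-- **Proposition (`|RI(S(Λ))|` is a connected simplicial complex).** -/
theorem RIS_connected_simplicial {V : Type} [Fintype V] (Λ : SimpleGraph V)
    (hconn : Λ.Connected) (hTF : Λ.CliqueFree 3) (hedge : ∃ v w : V, Λ.Adj v w) :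
    -- simplicial: a collection of vertices spans at most one simplex
    (∀ (s : Finset (Set V)) (W W' : Set V),
      RISCond Λ s W → RISCond Λ s W' → W = W') ∧
    -- connected
    (joinVertexGraph Λ).Connected := by
  classical
  constructor
  · -- simplicial part
    rintro s W W' ⟨hsne, hsmax, hWJ, hWsub, hWmax⟩ ⟨-, -, hW'J, hW'sub, hW'max⟩
    obtain ⟨U, hU⟩ := hsne
    obtain ⟨A, B, hA, hB, hABeq, hABdisj, hABadj⟩ := (hsmax hU).1
    obtain ⟨P, Q, hP, hQ, hPQeq, hPQdisj, hPQadj⟩ := hWJ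
    obtain ⟨P', Q', hP', hQ', hP'Q'eq, hP'Q'disj, hP'Q'adj⟩ := hW'J
    have hWU : P ∪ Q ⊆ A ∪ B := by
      rw [hPQeq, hABeq]; exact hWsub U hU
    have hW'U : P' ∪ Q' ⊆ A ∪ B := by
      rw [hP'Q'eq, hABeq]; exact hW'sub U hU
    have finish : IsJoinSet Λ (W ∪ W') → W = W' := by
      intro hJ
      have hsubs : ∀ U' ∈ s, W ∪ W' ⊆ U' :=
        fun U' hU' => Set.union_subset (hWsub U' hU') (hW'sub U' hU')
      have h1 : W ∪ W' = W := hWmax _ hJ hsubs Set.subset_union_left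
      have h2 : W ∪ W' = W' := hW'max _ hJ hsubs Set.subset_union_right
      exact h1.symm.trans h2
    have hside := side_lemma Λ hTF hABadj hA hB hABdisj hPQadj hP hQ hWU
    have hside' := side_lemma Λ hTF hABadj hA hB hABdisj hP'Q'adj hP' hQ' hW'U
    rcases hside with ⟨hPA, hQB⟩ | ⟨hPB, hQA⟩ <;>
      rcases hside' with ⟨hP'A, hQ'B⟩ | ⟨hP'B, hQ'A⟩
    · refine finish ?_
      rw [← hPQeq, ← hP'Q'eq]
      exact union_is_join Λ hABadj hPQadj hP'Q'adj hPA hQB hP'A hQ'B hP hQ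
    · refine finish ?_
      rw [← hPQeq, ← hP'Q'eq, Set.union_comm P' Q']
      exact union_is_join Λ hABadj hPQadj (fun v hv w hw => (hP'Q'adj w hw v hv).symm)
        hPA hQB hQ'A hP'B hP hQ
    · refine finish ?_
      rw [← hPQeq, ← hP'Q'eq, Set.union_comm P Q]
      exact union_is_join Λ hABadj (fun v hv w hw => (hPQadj w hw v hv).symm) hP'Q'adj
        hQA hPB hP'A hQ'B hQ hP
    · refine finish ?_
      rw [← hPQeq, ← hP'Q'eq, Set.union_comm P Q, Set.union_comm P' Q']
      exact union_is_join Λ hABadj (fun v hv w hw => (hPQadj w hw v hv).symm)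
        (fun v hv w hw => (hP'Q'adj w hw v hv).symm) hQA hPB hQ'A hP'B hQ hP
  · -- connectedness
    have hnbr := exists_neighbor Λ hconn hedge
    have starJoin : ∀ v : V, IsJoinSet Λ ({v} ∪ Λ.neighborSet v) := fun v =>
      isJoinSet_of_adj Λ ⟨v, rfl⟩ (hnbr v) (by rintro x rfl w hw; exact hw)
    choose Mstar hmem hsubstar using fun v => exists_maximal_join Λ (starJoin v)
    -- any maximal join containing `v` is reachable from `Mstar v`
    have reach_star : ∀ (M : Set V) (hM : M ∈ maxJoinSets Λ) (v : V), v ∈ M →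
        (joinVertexGraph Λ).Reachable ⟨M, hM⟩ ⟨Mstar v, hmem v⟩ := by
      intro M hM v hv
      obtain ⟨A, B, hA, hB, hABeq, hdisj, hadj⟩ := hM.1
      have main : ∀ A B : Set V, B.Nonempty → A ∪ B = M →
          (∀ x ∈ A, ∀ y ∈ B, Λ.Adj x y) → v ∈ A →
          (joinVertexGraph Λ).Reachable ⟨M, hM⟩ ⟨Mstar v, hmem v⟩ := by
        intro A B hB hABeq hadj hvA
        have hJ : IsJoinSet Λ ({v} ∪ B) :=
          isJoinSet_of_adj Λ ⟨v, rfl⟩ hB (by rintro x rfl y hy; exact hadj _ hvA y hy)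
        have hsubM : {v} ∪ B ⊆ M := by
          rw [← hABeq]
          exact Set.union_subset (by rintro x rfl; exact Or.inl hvA) Set.subset_union_right
        have hsubS : {v} ∪ B ⊆ Mstar v := by
          refine Set.union_subset ?_ ?_
          · rintro x rfl; exact hsubstar _ (Or.inl rfl)
          · intro y hy; exact hsubstar v (Or.inr (hadj v hvA y hy))
        by_cases hEq : M = Mstar v
        · exact hEq ▸ SimpleGraph.Reachable.refl _
        · exact SimpleGraph.Adj.reachable (by
            unfold joinVertexGraph
            exact ⟨fun h => hEq (congrArg Subtype.val h), {v} ∪ B, hJ, hsubM, hsubS⟩)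
      have hv' : v ∈ A ∪ B := by rw [hABeq]; exact hv
      rcases hv' with hvA | hvB
      · exact main A B hB hABeq hadj hvA
      · exact main B A hA (by rw [Set.union_comm]; exact hABeq)
          (fun x hx y hy => (hadj y hy x hx).symm) hvB
    have star_step : ∀ v w : V, Λ.Adj v w →
        (joinVertexGraph Λ).Reachable ⟨Mstar v, hmem v⟩ ⟨Mstar w, hmem w⟩ := by
      intro v w hvw
      exact reach_star (Mstar v) (hmem v) w (hsubstar v (Or.inr hvw))
    have star_reach : ∀ v w : V,
        (joinVertexGraph Λ).Reachable ⟨Mstar v, hmem v⟩ ⟨Mstar w, hmem w⟩ := by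
      intro v w
      obtain ⟨p⟩ := hconn.preconnected v w
      induction p with
      | nil => exact SimpleGraph.Reachable.refl _
      | cons h _ ih => exact (star_step _ _ h).trans ih
    obtain ⟨v0, w0, hvw0⟩ := hedge
    haveI : Nonempty {W : Set V // W ∈ maxJoinSets Λ} := ⟨⟨Mstar v0, hmem v0⟩⟩
    refine ⟨fun M M' => ?_⟩
    obtain ⟨W, hW⟩ := M
    obtain ⟨W', hW'⟩ := M'
    obtain ⟨A, B, hA, hB, hABeq, -, -⟩ := hW.1
    obtain ⟨A', B', hA', hB', hA'B'eq, -, -⟩ := hW'.1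
    obtain ⟨v, hv⟩ := hA
    obtain ⟨v', hv'⟩ := hA'
    have hvW : v ∈ W := by rw [← hABeq]; exact Or.inl hv
    have hv'W' : v' ∈ W' := by rw [← hA'B'eq]; exact Or.inl hv'
    exact (reach_star W hW v hvW).trans
      ((star_reach v v').trans (reach_star W' hW' v' hv'W').symm)

end
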